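/- arXiv:1607.04548 — 3 statements merged into one kernel-verified Lean document; each statement's English description precedes it below -/
import Mathlib

section
/- Let G=(V,E) be a locally finite graph with symmetric positive edge weights, and suppose μ(x) ≥ μ_min > 0 for all x ∈ V and h satisfies (H1) and (H2). If (u_k) is a bounded sequence in ℋ, then there exists u ∈ ℋ such that, up to a subsequence, u_k converges to u weakly in ℋ and u_k converges to u strongly in L^q(V,μ) for every q with 1 ≤ q ≤ +∞; in particular ℋ is compactly embedded in L^q(V,μ) for all 1 ≤ q ≤ +∞. -/
open Filter Topology

namespace GraphNLE

variable {V : Type*}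

/-- Integral of `g` over `V` w.r.t. the measure `μ`: `∫_V g dμ = Σ_x μ(x) g(x)`. -/
noncomputable def intV (μ g : V → ℝ) : ℝ := ∑' x, μ x * g x

/-- The graph (μ-)Laplacian: `Δu(x) = (1/μ(x)) Σ_{y} w_{xy} (u(y)-u(x))`. -/
noncomputable def lap (w : V → V → ℝ) (μ u : V → ℝ) (x : V) : ℝ :=
  (1 / μ x) * ∑' y, w x y * (u y - u x)

/-- Squared length of the gradient: `|∇u|²(x) = (1/(2μ(x))) Σ_y w_{xy} (u(y)-u(x))²`. -/
noncomputable def gradSq (w : V → V → ℝ) (μ u : V → ℝ) (x : V) : ℝ :=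
  (1 / (2 * μ x)) * ∑' y, w x y * (u y - u x) ^ 2

/-- The gradient form `Γ(u,v)(x) = (1/(2μ(x))) Σ_y w_{xy} (u(y)-u(x))(v(y)-v(x))`. -/
noncomputable def gamma (w : V → V → ℝ) (μ u v : V → ℝ) (x : V) : ℝ :=
  (1 / (2 * μ x)) * ∑' y, w x y * (u y - u x) * (v y - v x)

/-- Membership in `W^{1,2}(V)`: finite `∫(|∇u|² + u²) dμ`. -/
def memW (w : V → V → ℝ) (μ u : V → ℝ) : Prop :=
  Summable (fun x => μ x * gradSq w μ u x) ∧ Summable (fun x => μ x * u x ^ 2)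

/-- The `W^{1,2}` norm `(∫_V (|∇u|² + u²) dμ)^{1/2}`. -/
noncomputable def normW (w : V → V → ℝ) (μ u : V → ℝ) : ℝ :=
  Real.sqrt (intV μ fun x => gradSq w μ u x + u x ^ 2)

/-- Membership in the space `ℋ`: finite `∫(|∇u|² + h u²) dμ`. -/
def memH (w : V → V → ℝ) (μ h u : V → ℝ) : Prop :=
  Summable (fun x => μ x * gradSq w μ u x) ∧ Summable (fun x => μ x * (h x * u x ^ 2))

/-- The norm of `ℋ`: `‖u‖_ℋ = (∫_V (|∇u|² + h u²) dμ)^{1/2}`. -/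
noncomputable def normH (w : V → V → ℝ) (μ h u : V → ℝ) : ℝ :=
  Real.sqrt (intV μ fun x => gradSq w μ u x + h x * u x ^ 2)

/-- The inner product of `ℋ`: `⟨u,v⟩_ℋ = ∫_V (Γ(u,v) + h u v) dμ`. -/
noncomputable def innerH (w : V → V → ℝ) (μ h u v : V → ℝ) : ℝ :=
  intV μ fun x => gamma w μ u v x + h x * u x * v x

/-- `λ₁ = inf { ∫(|∇u|² + h u²) dμ : u ∈ ℋ, ∫ u² dμ = 1 }`. -/
noncomputable def lambda1 (w : V → V → ℝ) (μ h : V → ℝ) : ℝ :=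
  sInf {t : ℝ | ∃ u : V → ℝ, memH w μ h u ∧ intV μ (fun x => u x ^ 2) = 1 ∧
    intV μ (fun x => gradSq w μ u x + h x * u x ^ 2) = t}

/-- The primitive `F(x,s) = ∫_0^s f(x,t) dt`. -/
noncomputable def Fint (f : V → ℝ → ℝ) (x : V) (s : ℝ) : ℝ := ∫ t in (0:ℝ)..s, f x t

/-- The functional `J(u) = (1/2)∫(|∇u|² + h u²) dμ − ∫ F(x,u) dμ`. -/
noncomputable def energy (w : V → V → ℝ) (μ h : V → ℝ) (f : V → ℝ → ℝ) (u : V → ℝ) : ℝ :=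
  (1 / 2) * intV μ (fun x => gradSq w μ u x + h x * u x ^ 2) -
    intV μ (fun x => Fint f x (u x))

/-- The perturbed functional `J_ε(u) = J(u) − ε ∫ g u dμ`. -/
noncomputable def energyP (w : V → V → ℝ) (μ h : V → ℝ) (f : V → ℝ → ℝ) (g : V → ℝ)
    (ε : ℝ) (u : V → ℝ) : ℝ :=
  energy w μ h f u - ε * intV μ (fun x => g x * u x)

/-- Weak convergence `u_k ⇀ u` in the Hilbert space `ℋ`. -/
def weakConvH (w : V → V → ℝ) (μ h : V → ℝ) (uk : ℕ → V → ℝ) (u : V → ℝ) : Prop :=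
  ∀ v : V → ℝ, memH w μ h v →
    Tendsto (fun k => innerH w μ h (uk k) v) atTop (nhds (innerH w μ h u v))

/-- The `L^q(V,μ)` norm for finite `q`. -/
noncomputable def LqNorm (μ : V → ℝ) (q : ℝ) (u : V → ℝ) : ℝ :=
  (intV μ fun x => |u x| ^ q) ^ (1 / q)

/-- The `L^∞(V)` norm `sup_x |u(x)|`. -/
noncomputable def LinfNorm (u : V → ℝ) : ℝ := ⨆ x, |u x|

/-- `g` (viewed via the pairing `u ↦ ∫ g u dμ`) belongs to the dual `ℋ'` of `ℋ`. -/
def memHdual (w : V → V → ℝ) (μ h g : V → ℝ) : Prop :=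
  ∃ C : ℝ, ∀ u : V → ℝ, memH w μ h u →
    Summable (fun x => μ x * (g x * u x)) ∧
    |intV μ fun x => g x * u x| ≤ C * normH w μ h u

/-- `u ∈ ℋ` is a weak solution of `−Δu + hu = f(x,u)`. -/
def weakSol (w : V → V → ℝ) (μ h : V → ℝ) (f : V → ℝ → ℝ) (u : V → ℝ) : Prop :=
  memH w μ h u ∧ ∀ φ : V → ℝ, memH w μ h φ →
    intV μ (fun x => gamma w μ u φ x + h x * u x * φ x) =
      intV μ (fun x => f x (u x) * φ x)

/-- `u ∈ ℋ` is a weak solution of the perturbed equation `−Δu + hu = f(x,u) + εg`. -/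
def weakSolP (w : V → V → ℝ) (μ h : V → ℝ) (f : V → ℝ → ℝ) (g : V → ℝ) (ε : ℝ)
    (u : V → ℝ) : Prop :=
  memH w μ h u ∧ ∀ φ : V → ℝ, memH w μ h φ →
    intV μ (fun x => gamma w μ u φ x + h x * u x * φ x) =
      intV μ (fun x => f x (u x) * φ x) + ε * intV μ (fun x => g x * φ x)

/-- The simple graph underlying the weights `w` (edges where the weight is nonzero). -/
def adjGraph (w : V → V → ℝ) : SimpleGraph V where
  Adj x y := x ≠ y ∧ (w x y ≠ 0 ∨ w y x ≠ 0)
  symm := ⟨fun x y hxy => ⟨hxy.1.symm, hxy.2.symm⟩⟩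
  loopless := ⟨fun x hx => hx.1 rfl⟩


section Aux

variable {w : V → V → ℝ} {μ : V → ℝ}

lemma gradSq_eq_sum (hlf : ∀ x : V, {y | w x y ≠ 0}.Finite) (u : V → ℝ) (x : V) :
    gradSq w μ u x = (1 / (2 * μ x)) * ∑ y ∈ (hlf x).toFinset, w x y * (u y - u x) ^ 2 := by
  unfold gradSq
  congr 1
  refine tsum_eq_sum fun y hy => ?_
  have hw : w x y = 0 := by
    by_contra hne
    exact hy ((hlf x).mem_toFinset.mpr hne)
  simp [hw]

lemma gamma_eq_sum (hlf : ∀ x : V, {y | w x y ≠ 0}.Finite) (u v : V → ℝ) (x : V) :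
    gamma w μ u v x
      = (1 / (2 * μ x)) * ∑ y ∈ (hlf x).toFinset, w x y * (u y - u x) * (v y - v x) := by
  unfold gamma
  congr 1
  refine tsum_eq_sum fun y hy => ?_
  have hw : w x y = 0 := by
    by_contra hne
    exact hy ((hlf x).mem_toFinset.mpr hne)
  simp [hw]

lemma gradSq_nonneg (hwnn : ∀ x y, 0 ≤ w x y) (hμpos : ∀ x, 0 < μ x) (u : V → ℝ) (x : V) :
    0 ≤ gradSq w μ u x := by
  unfold gradSq
  have := hμpos x
  refine mul_nonneg (by positivity) ?_
  exact tsum_nonneg fun y => mul_nonneg (hwnn x y) (sq_nonneg _)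

lemma gradSq_sub_le (hlf : ∀ x : V, {y | w x y ≠ 0}.Finite) (hwnn : ∀ x y, 0 ≤ w x y)
    (hμpos : ∀ x, 0 < μ x) (a b : V → ℝ) (x : V) :
    gradSq w μ (fun y => a y - b y) x ≤ 2 * gradSq w μ a x + 2 * gradSq w μ b x := by
  rw [gradSq_eq_sum hlf, gradSq_eq_sum hlf, gradSq_eq_sum hlf]
  have hμx := hμpos x
  have hc : 0 ≤ 1 / (2 * μ x) := by positivity
  have hsum : ∑ y ∈ (hlf x).toFinset, w x y * ((a y - b y) - (a x - b x)) ^ 2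
      ≤ ∑ y ∈ (hlf x).toFinset,
        (2 * (w x y * (a y - a x) ^ 2) + 2 * (w x y * (b y - b x) ^ 2)) := by
    refine Finset.sum_le_sum fun y _ => ?_
    have hw := hwnn x y
    nlinarith [sq_nonneg ((a y - a x) + (b y - b x)), mul_nonneg hw (sq_nonneg ((a y - a x) + (b y - b x)))]
  calc (1 / (2 * μ x)) * ∑ y ∈ (hlf x).toFinset, w x y * ((a y - b y) - (a x - b x)) ^ 2
      ≤ (1 / (2 * μ x)) * ∑ y ∈ (hlf x).toFinset,
          (2 * (w x y * (a y - a x) ^ 2) + 2 * (w x y * (b y - b x) ^ 2)) :=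
        mul_le_mul_of_nonneg_left hsum hc
    _ = 2 * ((1 / (2 * μ x)) * ∑ y ∈ (hlf x).toFinset, w x y * (a y - a x) ^ 2)
        + 2 * ((1 / (2 * μ x)) * ∑ y ∈ (hlf x).toFinset, w x y * (b y - b x) ^ 2) := by
        rw [Finset.sum_add_distrib, ← Finset.mul_sum, ← Finset.mul_sum]; ring

lemma abs_gamma_le (hlf : ∀ x : V, {y | w x y ≠ 0}.Finite) (hwnn : ∀ x y, 0 ≤ w x y)
    (hμpos : ∀ x, 0 < μ x) {t : ℝ} (ht : 0 < t) (a v : V → ℝ) (x : V) :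
    |gamma w μ a v x| ≤ 1 / (2 * t) * gradSq w μ a x + t / 2 * gradSq w μ v x := by
  rw [gamma_eq_sum hlf, gradSq_eq_sum hlf, gradSq_eq_sum hlf]
  have hμx := hμpos x
  have hc : 0 ≤ 1 / (2 * μ x) := by positivity
  rw [abs_mul, abs_of_nonneg hc]
  have h2 : 2 * t * |∑ y ∈ (hlf x).toFinset, w x y * (a y - a x) * (v y - v x)|
      ≤ ∑ y ∈ (hlf x).toFinset, w x y * (a y - a x) ^ 2
        + t ^ 2 * ∑ y ∈ (hlf x).toFinset, w x y * (v y - v x) ^ 2 := by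
    have habs : |∑ y ∈ (hlf x).toFinset, w x y * (a y - a x) * (v y - v x)|
        ≤ ∑ y ∈ (hlf x).toFinset, |w x y * (a y - a x) * (v y - v x)| :=
      Finset.abs_sum_le_sum_abs _ _
    have hterm : ∀ y ∈ (hlf x).toFinset,
        2 * t * |w x y * (a y - a x) * (v y - v x)|
          ≤ w x y * (a y - a x) ^ 2 + t ^ 2 * (w x y * (v y - v x) ^ 2) := by
      intro y _
      have hw := hwnn x y
      rw [abs_mul, abs_mul, abs_of_nonneg hw, ← sq_abs (a y - a x), ← sq_abs (v y - v x)]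
      nlinarith [mul_nonneg hw (sq_nonneg (|a y - a x| - t * |v y - v x|))]
    calc 2 * t * |∑ y ∈ (hlf x).toFinset, w x y * (a y - a x) * (v y - v x)|
        ≤ 2 * t * ∑ y ∈ (hlf x).toFinset, |w x y * (a y - a x) * (v y - v x)| := by
          exact mul_le_mul_of_nonneg_left habs (by positivity)
      _ = ∑ y ∈ (hlf x).toFinset, 2 * t * |w x y * (a y - a x) * (v y - v x)| := by
          rw [Finset.mul_sum]
      _ ≤ ∑ y ∈ (hlf x).toFinset,
            (w x y * (a y - a x) ^ 2 + t ^ 2 * (w x y * (v y - v x) ^ 2)) :=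
          Finset.sum_le_sum hterm
      _ = ∑ y ∈ (hlf x).toFinset, w x y * (a y - a x) ^ 2
          + t ^ 2 * ∑ y ∈ (hlf x).toFinset, w x y * (v y - v x) ^ 2 := by
          rw [Finset.sum_add_distrib, ← Finset.mul_sum]
  have h3 : |∑ y ∈ (hlf x).toFinset, w x y * (a y - a x) * (v y - v x)|
      ≤ (∑ y ∈ (hlf x).toFinset, w x y * (a y - a x) ^ 2
        + t ^ 2 * ∑ y ∈ (hlf x).toFinset, w x y * (v y - v x) ^ 2) / (2 * t) := by
    rw [le_div_iff₀ (by positivity)]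
    linarith [h2]
  calc (1 / (2 * μ x)) * |∑ y ∈ (hlf x).toFinset, w x y * (a y - a x) * (v y - v x)|
      ≤ (1 / (2 * μ x)) * ((∑ y ∈ (hlf x).toFinset, w x y * (a y - a x) ^ 2
        + t ^ 2 * ∑ y ∈ (hlf x).toFinset, w x y * (v y - v x) ^ 2) / (2 * t)) :=
        mul_le_mul_of_nonneg_left h3 hc
    _ = 1 / (2 * t) * ((1 / (2 * μ x)) * ∑ y ∈ (hlf x).toFinset, w x y * (a y - a x) ^ 2)
        + t / 2 * ((1 / (2 * μ x)) * ∑ y ∈ (hlf x).toFinset, w x y * (v y - v x) ^ 2) := by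
        field_simp

lemma gamma_sub_left (hlf : ∀ x : V, {y | w x y ≠ 0}.Finite) (a b v : V → ℝ) (x : V) :
    gamma w μ (fun y => a y - b y) v x = gamma w μ a v x - gamma w μ b v x := by
  rw [gamma_eq_sum hlf, gamma_eq_sum hlf, gamma_eq_sum hlf, ← mul_sub,
    ← Finset.sum_sub_distrib]
  congr 1
  refine Finset.sum_congr rfl fun y _ => by ring

lemma tendsto_gradSq (hlf : ∀ x : V, {y | w x y ≠ 0}.Finite) (u : V → ℝ) (vkk : ℕ → V → ℝ)
    (hpt : ∀ y, Tendsto (fun k => vkk k y) atTop (𝓝 (u y))) (x : V) :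
    Tendsto (fun k => gradSq w μ (vkk k) x) atTop (𝓝 (gradSq w μ u x)) := by
  simp only [gradSq_eq_sum hlf]
  refine Tendsto.const_mul _ (tendsto_finset_sum _ fun y _ => ?_)
  exact Tendsto.const_mul _ (((hpt y).sub (hpt x)).pow 2)

lemma tendsto_gamma (hlf : ∀ x : V, {y | w x y ≠ 0}.Finite) (u v : V → ℝ) (vkk : ℕ → V → ℝ)
    (hpt : ∀ y, Tendsto (fun k => vkk k y) atTop (𝓝 (u y))) (x : V) :
    Tendsto (fun k => gamma w μ (vkk k) v x) atTop (𝓝 (gamma w μ u v x)) := by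
  simp only [gamma_eq_sum hlf]
  refine Tendsto.const_mul _ (tendsto_finset_sum _ fun y _ => ?_)
  exact (Tendsto.const_mul (w x y) ((hpt y).sub (hpt x))).mul_const (v y - v x)

lemma exists_tail_small {g : V → ℝ} {ε : ℝ} (hε : 0 < ε) :
    ∃ s : Finset V, ∑' (x : {y : V // y ∉ s}), g x < ε :=
  ((tendsto_tsum_compl_atTop_zero g).eventually (gt_mem_nhds hε)).exists

lemma abs_tsum_subtype_le_of_le {F G : V → ℝ} (s : Finset V)
    (hG : Summable G) (hFG : ∀ x, |F x| ≤ G x) :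
    |∑' (x : {y : V // y ∉ s}), F x| ≤ ∑' (x : {y : V // y ∉ s}), G x := by
  have hGs : Summable (fun x : {y : V // y ∉ s} => G x) := hG.subtype _
  have hFabs : Summable (fun x : {y : V // y ∉ s} => |F x|) :=
    hGs.of_nonneg_of_le (fun x => abs_nonneg _) (fun x => hFG x)
  have hFn : Summable (fun x : {y : V // y ∉ s} => ‖F (x : V)‖) := by
    simpa only [Real.norm_eq_abs] using hFabs
  have habs : ‖∑' (x : {y : V // y ∉ s}), F x‖ ≤ ∑' (x : {y : V // y ∉ s}), ‖F (x : V)‖ :=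
    norm_tsum_le_tsum_norm hFn
  simp only [Real.norm_eq_abs] at habs
  calc |∑' (x : {y : V // y ∉ s}), F x| ≤ ∑' (x : {y : V // y ∉ s}), |F x| := habs
    _ ≤ ∑' (x : {y : V // y ∉ s}), G x := Summable.tsum_le_tsum (fun x => hFG x) hFabs hGs

lemma tsum_tendsto_zero_of_tail (F : ℕ → V → ℝ) (hsum : ∀ k, Summable (F k))
    (hpt : ∀ x, Tendsto (fun k => F k x) atTop (𝓝 0))
    (htail : ∀ ε : ℝ, 0 < ε → ∃ s : Finset V, ∀ k, |∑' (x : {y : V // y ∉ s}), F k x| ≤ ε) :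
    Tendsto (fun k => ∑' x, F k x) atTop (𝓝 0) := by
  rw [Metric.tendsto_atTop]
  intro ε hε
  obtain ⟨s, hs⟩ := htail (ε / 2) (by linarith)
  have hhead : Tendsto (fun k => ∑ x ∈ s, F k x) atTop (𝓝 0) := by
    have h0 : Tendsto (fun k => ∑ x ∈ s, F k x) atTop (𝓝 (∑ _x ∈ s, (0 : ℝ))) :=
      tendsto_finset_sum _ fun x _ => hpt x
    simpa using h0
  rw [Metric.tendsto_atTop] at hhead
  obtain ⟨N, hN⟩ := hhead (ε / 2) (by linarith)
  refine ⟨N, fun k hk => ?_⟩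
  have hsplit := Summable.sum_add_tsum_compl (s := s) (hsum k)
  have h1 := hN k hk
  rw [Real.dist_eq, sub_zero] at h1 ⊢
  have htl : |∑' (x : ↑(↑s : Set V)ᶜ), F k ↑x| ≤ ε / 2 := hs k
  calc |∑' x, F k x| = |∑ x ∈ s, F k x + ∑' (x : ↑(↑s : Set V)ᶜ), F k ↑x| := by
        rw [hsplit]
    _ ≤ |∑ x ∈ s, F k x| + |∑' (x : ↑(↑s : Set V)ᶜ), F k ↑x| := abs_add_le _ _
    _ < ε / 2 + ε / 2 := add_lt_add_of_lt_of_le h1 htl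
    _ = ε := by ring

end Aux

set_option maxHeartbeats 4000000 in
theorem compact_embedding_H2
    (w : V → V → ℝ) (hsymm : ∀ x y, w x y = w y x) (hwnn : ∀ x y, 0 ≤ w x y)
    (hlf : ∀ x : V, {y | w x y ≠ 0}.Finite)
    (μ : V → ℝ) (μmin : ℝ) (hμmin : 0 < μmin) (hμ : ∀ x, μmin ≤ μ x)
    (h : V → ℝ) (h₀ : ℝ) (hh₀ : 0 < h₀) (hH1 : ∀ x, h₀ ≤ h x)
    (hH2 : Summable fun x => μ x * (1 / h x))
    (uk : ℕ → V → ℝ) (hmem : ∀ k, memH w μ h (uk k))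
    (hbd : ∃ C : ℝ, ∀ k, normH w μ h (uk k) ≤ C) :
    ∃ u : V → ℝ, memH w μ h u ∧ ∃ φ : ℕ → ℕ, StrictMono φ ∧
      weakConvH w μ h (fun k => uk (φ k)) u ∧
      (∀ q : ℝ, 1 ≤ q →
        Tendsto (fun k => LqNorm μ q fun x => uk (φ k) x - u x) atTop (nhds 0)) ∧
      Tendsto (fun k => LinfNorm fun x => uk (φ k) x - u x) atTop (nhds 0) := by
  classical
  obtain ⟨C, hC⟩ := hbd
  have hC0 : 0 ≤ C := le_trans (Real.sqrt_nonneg _) (hC 0)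
  have hμpos : ∀ x, 0 < μ x := fun x => lt_of_lt_of_le hμmin (hμ x)
  have hhpos : ∀ x, 0 < h x := fun x => lt_of_lt_of_le hh₀ (hH1 x)
  have hhnn : ∀ x, 0 ≤ h x := fun x => (hhpos x).le
  haveI : Countable V := by
    have hs := hH2.countable_support
    have hsupp : Function.support (fun x => μ x * (1 / h x)) = Set.univ := by
      ext x
      simp only [Function.mem_support, Set.mem_univ, iff_true]
      exact ne_of_gt (mul_pos (hμpos x) (one_div_pos.mpr (hhpos x)))
    rw [hsupp] at hs
    exact Set.countable_univ_iff.mp hs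
  set P : (V → ℝ) → V → ℝ := fun u x => μ x * (gradSq w μ u x + h x * u x ^ 2) with hP
  have hPnn : ∀ u x, 0 ≤ P u x := fun u x =>
    mul_nonneg (hμpos x).le (add_nonneg (gradSq_nonneg hwnn hμpos u x)
      (mul_nonneg (hhnn x) (sq_nonneg _)))
  have hPsum : ∀ u, memH w μ h u → Summable (P u) := fun u hu => by
    have h2 := hu.1.add hu.2
    simpa [hP, mul_add] using h2
  have hnormHeq : ∀ u0 : V → ℝ, normH w μ h u0 = Real.sqrt (∑' x, P u0 x) := fun _ => rfl
  clear_value P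
  have hT : ∀ k, ∑' x, P (uk k) x ≤ C ^ 2 := by
    intro k
    have h1 : Real.sqrt (∑' x, P (uk k) x) ≤ C := by rw [← hnormHeq]; exact hC k
    have h2 : 0 ≤ ∑' x, P (uk k) x := tsum_nonneg (hPnn _)
    nlinarith [Real.sq_sqrt h2, Real.sqrt_nonneg (∑' x, P (uk k) x)]
  have hμh : 0 < μmin * h₀ := mul_pos hμmin hh₀
  set D : ℝ := Real.sqrt (C ^ 2 / (μmin * h₀)) with hD
  have hD0 : 0 ≤ D := Real.sqrt_nonneg _
  have hpb : ∀ u, memH w μ h u → (∑' x, P u x) ≤ C ^ 2 → ∀ x, u x ∈ Set.Icc (-D) D := by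
    intro u hu hTu x
    have h1 : P u x ≤ C ^ 2 := le_trans (Summable.le_tsum (hPsum u hu) x fun y _ => hPnn u y) hTu
    have h2 : μmin * h₀ * u x ^ 2 ≤ P u x := by
      have e1 : μmin * (h₀ * u x ^ 2) ≤ μ x * (h x * u x ^ 2) := by
        have e0 : h₀ * u x ^ 2 ≤ h x * u x ^ 2 :=
          mul_le_mul_of_nonneg_right (hH1 x) (sq_nonneg _)
        exact mul_le_mul (hμ x) e0 (by positivity) (hμpos x).le
      have e2 : μ x * (h x * u x ^ 2) ≤ P u x := by
        have hg := gradSq_nonneg hwnn hμpos u x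
        simp only [hP]
        nlinarith [(hμpos x).le]
      calc μmin * h₀ * u x ^ 2 = μmin * (h₀ * u x ^ 2) := by ring
        _ ≤ μ x * (h x * u x ^ 2) := e1
        _ ≤ P u x := e2
    have h3 : u x ^ 2 ≤ C ^ 2 / (μmin * h₀) := by
      rw [le_div_iff₀ hμh]
      nlinarith
    have h4 : |u x| ≤ D := by
      rw [hD, ← Real.sqrt_sq_eq_abs]
      exact Real.sqrt_le_sqrt h3
    exact ⟨neg_le_of_abs_le h4, le_of_abs_le h4⟩
  have hcomp : IsCompact (Set.univ.pi fun _ : V => Set.Icc (-D) D) :=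
    isCompact_univ_pi fun _ => isCompact_Icc
  have hmemS : ∀ k, uk k ∈ Set.univ.pi fun _ : V => Set.Icc (-D) D :=
    fun k x _ => hpb (uk k) (hmem k) (hT k) x
  obtain ⟨u, huS, φ, hφmono, hφconv⟩ := hcomp.isSeqCompact hmemS
  have hpt : ∀ x, Tendsto (fun k => uk (φ k) x) atTop (𝓝 (u x)) := by
    rw [tendsto_pi_nhds] at hφconv
    exact fun x => hφconv x
  have hfinu : ∀ s : Finset V, ∑ x ∈ s, P u x ≤ C ^ 2 := by
    intro s
    have hlim : Tendsto (fun k => ∑ x ∈ s, P (uk (φ k)) x) atTop (𝓝 (∑ x ∈ s, P u x)) := by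
      simp only [hP]
      refine tendsto_finset_sum _ fun x _ => ?_
      refine Tendsto.const_mul _ (Tendsto.add (tendsto_gradSq hlf u _ hpt x) ?_)
      exact Tendsto.const_mul _ ((hpt x).pow 2)
    refine le_of_tendsto hlim (Eventually.of_forall fun k => ?_)
    exact le_trans (Summable.sum_le_tsum s (fun y _ => hPnn _ y) (hPsum _ (hmem _))) (hT _)
  have humem : memH w μ h u := by
    constructor
    · refine summable_of_sum_le (c := C ^ 2) (fun x => mul_nonneg (hμpos x).le (gradSq_nonneg hwnn hμpos u x))
        (fun s => ?_)
      refine le_trans (Finset.sum_le_sum fun x _ => ?_) (hfinu s)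
      have e := mul_nonneg (hμpos x).le (mul_nonneg (hhnn x) (sq_nonneg (u x)))
      simp only [hP]
      nlinarith
    · refine summable_of_sum_le (c := C ^ 2)
        (fun x => mul_nonneg (hμpos x).le (mul_nonneg (hhnn x) (sq_nonneg (u x))))
        (fun s => ?_)
      refine le_trans (Finset.sum_le_sum fun x _ => ?_) (hfinu s)
      have e := mul_nonneg (hμpos x).le (gradSq_nonneg hwnn hμpos u x)
      simp only [hP]
      nlinarith
  have hTu : ∑' x, P u x ≤ C ^ 2 := Summable.tsum_le_of_sum_le (hPsum u humem) hfinu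
  set d : ℕ → V → ℝ := fun k x => uk (φ k) x - u x with hd
  have hdx : ∀ k x, d k x = uk (φ k) x - u x := fun _ _ => rfl
  have hgradd : ∀ k x, gradSq w μ (d k) x ≤ 2 * gradSq w μ (uk (φ k)) x + 2 * gradSq w μ u x :=
    fun k x => gradSq_sub_le hlf hwnn hμpos (uk (φ k)) u x
  have hgamd : ∀ k (v : V → ℝ) x,
      gamma w μ (d k) v x = gamma w μ (uk (φ k)) v x - gamma w μ u v x :=
    fun k v x => gamma_sub_left hlf (uk (φ k)) u v x
  clear_value d
  have hdpt : ∀ x, Tendsto (fun k => d k x) atTop (𝓝 0) := by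
    intro x
    have h0 := (hpt x).sub (tendsto_const_nhds (x := u x))
    simp only [hdx]
    simpa using h0
  have hdbound : ∀ k x, |d k x| ≤ 2 * D := by
    intro k x
    have h1 := hmemS (φ k) x (Set.mem_univ x)
    have h2 := huS x (Set.mem_univ x)
    rw [Set.mem_Icc] at h1 h2
    rw [hdx, abs_le]
    constructor <;> linarith [h1.1, h1.2, h2.1, h2.2]
  have hPd_le : ∀ k x, P (d k) x ≤ 2 * P (uk (φ k)) x + 2 * P u x := by
    intro k x
    have hg := hgradd k x
    have hq : h x * d k x ^ 2 ≤ 2 * (h x * uk (φ k) x ^ 2) + 2 * (h x * u x ^ 2) := by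
      rw [hdx]
      nlinarith [mul_nonneg (hhnn x) (sq_nonneg (uk (φ k) x + u x))]
    have H1 := mul_le_mul_of_nonneg_left hg (hμpos x).le
    have H2 := mul_le_mul_of_nonneg_left hq (hμpos x).le
    simp only [hP]
    nlinarith [H1, H2]
  have hPdsum : ∀ k, Summable (P (d k)) := by
    intro k
    refine Summable.of_nonneg_of_le (hPnn _) (hPd_le k) ?_
    exact ((hPsum _ (hmem _)).mul_left 2).add ((hPsum u humem).mul_left 2)
  have hTd : ∀ k, ∑' x, P (d k) x ≤ 8 * C ^ 2 := by
    intro k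
    calc ∑' x, P (d k) x ≤ ∑' x, (2 * P (uk (φ k)) x + 2 * P u x) :=
        Summable.tsum_le_tsum (hPd_le k) (hPdsum k)
          (((hPsum _ (hmem _)).mul_left 2).add ((hPsum u humem).mul_left 2))
      _ = 2 * (∑' x, P (uk (φ k)) x) + 2 * (∑' x, P u x) := by
        rw [Summable.tsum_add ((hPsum _ (hmem _)).mul_left 2) ((hPsum u humem).mul_left 2),
          tsum_mul_left, tsum_mul_left]
      _ ≤ 8 * C ^ 2 := by nlinarith [hT (φ k), hTu]
  have habsF : ∀ (t : ℝ), 0 < t → ∀ (a v : V → ℝ) (x : V),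
      |μ x * (gamma w μ a v x + h x * a x * v x)|
        ≤ 1 / (2 * t) * P a x + t / 2 * P v x := by
    intro t ht a v x
    have hμx := (hμpos x).le
    have h1 := abs_gamma_le hlf hwnn hμpos ht a v x
    have h2 : |h x * a x * v x| ≤ 1 / (2 * t) * (h x * a x ^ 2) + t / 2 * (h x * v x ^ 2) := by
      rw [abs_mul, abs_mul, abs_of_nonneg (hhnn x), ← sq_abs (a x), ← sq_abs (v x)]
      have key : 2 * t * (h x * |a x| * |v x|) ≤ h x * |a x| ^ 2 + t ^ 2 * (h x * |v x| ^ 2) := by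
        nlinarith [mul_nonneg (hhnn x) (sq_nonneg (|a x| - t * |v x|))]
      have h3 : h x * |a x| * |v x| ≤ (h x * |a x| ^ 2 + t ^ 2 * (h x * |v x| ^ 2)) / (2 * t) :=
        (le_div_iff₀ (by positivity)).mpr (by linarith)
      calc h x * |a x| * |v x| ≤ (h x * |a x| ^ 2 + t ^ 2 * (h x * |v x| ^ 2)) / (2 * t) := h3
        _ = 1 / (2 * t) * (h x * |a x| ^ 2) + t / 2 * (h x * |v x| ^ 2) := by
          field_simp
    calc |μ x * (gamma w μ a v x + h x * a x * v x)|
        = μ x * |gamma w μ a v x + h x * a x * v x| := by rw [abs_mul, abs_of_nonneg hμx]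
      _ ≤ μ x * (|gamma w μ a v x| + |h x * a x * v x|) :=
          mul_le_mul_of_nonneg_left (abs_add_le _ _) hμx
      _ ≤ μ x * ((1 / (2 * t) * gradSq w μ a x + t / 2 * gradSq w μ v x)
            + (1 / (2 * t) * (h x * a x ^ 2) + t / 2 * (h x * v x ^ 2))) :=
          mul_le_mul_of_nonneg_left (add_le_add h1 h2) hμx
      _ = 1 / (2 * t) * P a x + t / 2 * P v x := by simp only [hP]; ring
  have hweak : weakConvH w μ h (fun k => uk (φ k)) u := by
    intro v hv
    have hFbound : ∀ (t : ℝ), 0 < t → ∀ k x,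
        |μ x * (gamma w μ (d k) v x + h x * d k x * v x)|
          ≤ 1 / (2 * t) * P (d k) x + t / 2 * P v x :=
      fun t ht k x => habsF t ht (d k) v x
    have hFsum : ∀ k, Summable (fun x => μ x * (gamma w μ (d k) v x + h x * d k x * v x)) := by
      intro k
      refine Summable.of_abs (Summable.of_nonneg_of_le (fun x => abs_nonneg _)
        (hFbound 1 one_pos k) ?_)
      exact ((hPdsum k).mul_left _).add ((hPsum v hv).mul_left _)
    have hsumAux : ∀ (a : V → ℝ), memH w μ h a →
        Summable (fun x => μ x * (gamma w μ a v x + h x * a x * v x)) := by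
      intro a ha
      refine Summable.of_abs (Summable.of_nonneg_of_le (fun x => abs_nonneg _)
        (fun x => habsF 1 one_pos a v x) ?_)
      exact ((hPsum a ha).mul_left _).add ((hPsum v hv).mul_left _)
    have hid : ∀ k, innerH w μ h (uk (φ k)) v
        = innerH w μ h u v + ∑' x, μ x * (gamma w μ (d k) v x + h x * d k x * v x) := by
      intro k
      have hEq : ∀ x, μ x * (gamma w μ (d k) v x + h x * d k x * v x)
          = μ x * (gamma w μ (uk (φ k)) v x + h x * uk (φ k) x * v x)
            - μ x * (gamma w μ u v x + h x * u x * v x) := by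
        intro x
        rw [hgamd k v x, hdx]
        ring
      have h1 : ∑' x, μ x * (gamma w μ (d k) v x + h x * d k x * v x)
          = innerH w μ h (uk (φ k)) v - innerH w μ h u v := by
        calc ∑' x, μ x * (gamma w μ (d k) v x + h x * d k x * v x)
            = ∑' x, (μ x * (gamma w μ (uk (φ k)) v x + h x * uk (φ k) x * v x)
              - μ x * (gamma w μ u v x + h x * u x * v x)) := tsum_congr hEq
          _ = (∑' x, μ x * (gamma w μ (uk (φ k)) v x + h x * uk (φ k) x * v x))
              - ∑' x, μ x * (gamma w μ u v x + h x * u x * v x) :=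
              Summable.tsum_sub (hsumAux _ (hmem (φ k))) (hsumAux u humem)
          _ = innerH w μ h (uk (φ k)) v - innerH w μ h u v := rfl
      linarith [h1]
    have hF0 : Tendsto (fun k => ∑' x, μ x * (gamma w μ (d k) v x + h x * d k x * v x))
        atTop (𝓝 0) := by
      refine tsum_tendsto_zero_of_tail _ hFsum (fun x => ?_) (fun ε hε => ?_)
      · have hgam : Tendsto (fun k => gamma w μ (d k) v x) atTop
            (𝓝 (gamma w μ (fun _ => (0 : ℝ)) v x)) :=
          tendsto_gamma hlf (fun _ => (0 : ℝ)) v d (fun y => hdpt y) x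
        have hzero : gamma w μ (fun _ => (0 : ℝ)) v x = 0 := by
          rw [gamma_eq_sum hlf]
          simp
        rw [hzero] at hgam
        have hmul : Tendsto (fun k => μ x * (gamma w μ (d k) v x + h x * d k x * v x)) atTop
            (𝓝 (μ x * (0 + h x * 0 * v x))) :=
          Tendsto.const_mul _ (hgam.add (Tendsto.mul_const _ (Tendsto.const_mul _ (hdpt x))))
        simpa using hmul
      · set t : ℝ := (8 * C ^ 2 + 1) / ε with hts
        have ht : 0 < t := by positivity
        have htε : t * ε = 8 * C ^ 2 + 1 := by
          rw [hts]
          field_simp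
        obtain ⟨s, hs⟩ := exists_tail_small (g := P v) (show (0 : ℝ) < ε / t by positivity)
        refine ⟨s, fun k => ?_⟩
        have hb := abs_tsum_subtype_le_of_le
          (F := fun x => μ x * (gamma w μ (d k) v x + h x * d k x * v x))
          (G := fun x => 1 / (2 * t) * P (d k) x + t / 2 * P v x) s
          (((hPdsum k).mul_left _).add ((hPsum v hv).mul_left _)) (hFbound t ht k)
        refine hb.trans ?_
        have hsplit : ∑' (x : {y : V // y ∉ s}),
            (1 / (2 * t) * P (d k) (x : V) + t / 2 * P v (x : V))
            = 1 / (2 * t) * ∑' (x : {y : V // y ∉ s}), P (d k) (x : V)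
              + t / 2 * ∑' (x : {y : V // y ∉ s}), P v (x : V) := by
          have hS1 : Summable (fun x : {y : V // y ∉ s} => 1 / (2 * t) * P (d k) (x : V)) :=
            ((hPdsum k).subtype _).mul_left _
          have hS2 : Summable (fun x : {y : V // y ∉ s} => t / 2 * P v (x : V)) :=
            ((hPsum v hv).subtype _).mul_left _
          rw [Summable.tsum_add hS1 hS2, tsum_mul_left, tsum_mul_left]
        rw [hsplit]
        have hA : ∑' (x : {y : V // y ∉ s}), P (d k) (x : V) ≤ 8 * C ^ 2 :=
          le_trans (Summable.tsum_subtype_le (P (d k)) _ (hPnn _) (hPdsum k)) (hTd k)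
        have hB : ∑' (x : {y : V // y ∉ s}), P v (x : V) ≤ ε / t := hs.le
        have h1 : 1 / (2 * t) * ∑' (x : {y : V // y ∉ s}), P (d k) (x : V) ≤ ε / 2 := by
          have hA' : 1 / (2 * t) * ∑' (x : {y : V // y ∉ s}), P (d k) (x : V)
              ≤ 1 / (2 * t) * (8 * C ^ 2) :=
            mul_le_mul_of_nonneg_left hA (by positivity)
          refine hA'.trans ?_
          rw [div_mul_eq_mul_div, one_mul, div_le_iff₀ (by positivity)]
          nlinarith [htε]
        have h2 : t / 2 * ∑' (x : {y : V // y ∉ s}), P v (x : V) ≤ ε / 2 := by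
          have hB' : t / 2 * ∑' (x : {y : V // y ∉ s}), P v (x : V) ≤ t / 2 * (ε / t) :=
            mul_le_mul_of_nonneg_left hB (by linarith)
          refine hB'.trans (le_of_eq ?_)
          have ht0 : t ≠ 0 := ne_of_gt ht
          field_simp <;> ring
        linarith
    have hfin : Tendsto (fun k => innerH w μ h u v
        + ∑' x, μ x * (gamma w μ (d k) v x + h x * d k x * v x)) atTop
        (𝓝 (innerH w μ h u v + 0)) := tendsto_const_nhds.add hF0
    rw [add_zero] at hfin
    exact hfin.congr fun k => (hid k).symm
  -- L¹ machinery
  have hbnd : ∀ (t : ℝ), 0 < t → ∀ k x,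
      μ x * |d k x| ≤ 1 / (2 * t) * (μ x * (1 / h x)) + t / 2 * P (d k) x := by
    intro t ht k x
    have hhx := hhpos x
    have hμx := (hμpos x).le
    have key : |d k x| ≤ 1 / (2 * t) * (1 / h x) + t / 2 * (h x * d k x ^ 2) := by
      have k2 : 2 * t * (h x * |d k x|) ≤ 1 + t ^ 2 * (h x) ^ 2 * |d k x| ^ 2 := by
        nlinarith [sq_nonneg (t * h x * |d k x| - 1)]
      rw [sq_abs] at k2
      have k3 : |d k x| ≤ (1 + t ^ 2 * (h x) ^ 2 * d k x ^ 2) / (2 * t * h x) :=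
        (le_div_iff₀ (by positivity)).mpr (by linarith [k2])
      refine k3.trans (le_of_eq ?_)
      field_simp <;> ring
    have hμgr := gradSq_nonneg hwnn hμpos (d k) x
    calc μ x * |d k x| ≤ μ x * (1 / (2 * t) * (1 / h x) + t / 2 * (h x * d k x ^ 2)) :=
        mul_le_mul_of_nonneg_left key hμx
      _ = 1 / (2 * t) * (μ x * (1 / h x)) + t / 2 * (μ x * (h x * d k x ^ 2)) := by ring
      _ ≤ 1 / (2 * t) * (μ x * (1 / h x)) + t / 2 * P (d k) x := by
          have hle : μ x * (h x * d k x ^ 2) ≤ P (d k) x := by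
            simp only [hP]
            nlinarith
          nlinarith [mul_le_mul_of_nonneg_left hle (by positivity : (0:ℝ) ≤ t / 2)]
  have hL1sum : ∀ k, Summable (fun x => μ x * |d k x|) := fun k =>
    Summable.of_nonneg_of_le (fun x => mul_nonneg (hμpos x).le (abs_nonneg _))
      (hbnd 1 one_pos k) ((hH2.mul_left _).add ((hPdsum k).mul_left _))
  have hL1 : Tendsto (fun k => ∑' x, μ x * |d k x|) atTop (𝓝 0) := by
    refine tsum_tendsto_zero_of_tail _ hL1sum (fun x => ?_) (fun ε hε => ?_)
    · have h0 := (hdpt x).abs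
      rw [abs_zero] at h0
      have hmul := h0.const_mul (μ x)
      simpa using hmul
    · set t : ℝ := ε / (8 * C ^ 2 + 1) with hts
      have ht : 0 < t := by positivity
      have ht0 : t ≠ 0 := ne_of_gt ht
      have htε : t * (8 * C ^ 2 + 1) = ε := by
        rw [hts]
        field_simp
      obtain ⟨s, hs⟩ := exists_tail_small (g := fun x => μ x * (1 / h x))
        (show (0 : ℝ) < ε * t by positivity)
      refine ⟨s, fun k => ?_⟩
      have hb := abs_tsum_subtype_le_of_le (F := fun x => μ x * |d k x|)
        (G := fun x => 1 / (2 * t) * (μ x * (1 / h x)) + t / 2 * P (d k) x) s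
        ((hH2.mul_left _).add ((hPdsum k).mul_left _)) (fun x => by
          rw [abs_of_nonneg (mul_nonneg (hμpos x).le (abs_nonneg _))]
          exact hbnd t ht k x)
      refine hb.trans ?_
      have hsplit : ∑' (x : {y : V // y ∉ s}),
          (1 / (2 * t) * (μ (x : V) * (1 / h (x : V))) + t / 2 * P (d k) (x : V))
          = 1 / (2 * t) * ∑' (x : {y : V // y ∉ s}), (μ (x : V) * (1 / h (x : V)))
            + t / 2 * ∑' (x : {y : V // y ∉ s}), P (d k) (x : V) := by
        have hS1 : Summable (fun x : {y : V // y ∉ s} => 1 / (2 * t) * (μ (x : V) * (1 / h (x : V)))) :=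
          (hH2.subtype _).mul_left _
        have hS2 : Summable (fun x : {y : V // y ∉ s} => t / 2 * P (d k) (x : V)) :=
          ((hPdsum k).subtype _).mul_left _
        rw [Summable.tsum_add hS1 hS2, tsum_mul_left, tsum_mul_left]
      rw [hsplit]
      have hA : ∑' (x : {y : V // y ∉ s}), (μ (x : V) * (1 / h (x : V))) ≤ ε * t := hs.le
      have hB : ∑' (x : {y : V // y ∉ s}), P (d k) (x : V) ≤ 8 * C ^ 2 :=
        le_trans (Summable.tsum_subtype_le (fun x => P (d k) x) _ (hPnn _) (hPdsum k)) (hTd k)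
      have h1 : 1 / (2 * t) * ∑' (x : {y : V // y ∉ s}), (μ (x : V) * (1 / h (x : V))) ≤ ε / 2 := by
        have hA' : 1 / (2 * t) * ∑' (x : {y : V // y ∉ s}), (μ (x : V) * (1 / h (x : V)))
            ≤ 1 / (2 * t) * (ε * t) := mul_le_mul_of_nonneg_left hA (by positivity)
        refine hA'.trans (le_of_eq ?_)
        field_simp <;> ring
      have h2 : t / 2 * ∑' (x : {y : V // y ∉ s}), P (d k) (x : V) ≤ ε / 2 := by
        have hB' : t / 2 * ∑' (x : {y : V // y ∉ s}), P (d k) (x : V) ≤ t / 2 * (8 * C ^ 2) :=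
          mul_le_mul_of_nonneg_left hB (by positivity)
        refine hB'.trans ?_
        nlinarith [htε, ht.le]
      linarith
  -- L^q convergence
  have hLq : ∀ q : ℝ, 1 ≤ q →
      Tendsto (fun k => LqNorm μ q fun x => uk (φ k) x - u x) atTop (𝓝 0) := by
    intro q hq
    have hq0 : (0 : ℝ) < q := by linarith
    set M : ℝ := 2 * D + 1 with hM
    have hM0 : 0 < M := by positivity
    have hMb : ∀ k x, |d k x| ≤ M := fun k x => (hdbound k x).trans (by linarith)
    have hkey : ∀ k x, μ x * |d k x| ^ q ≤ M ^ (q - 1) * (μ x * |d k x|) := by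
      intro k x
      have hμx := (hμpos x).le
      have hd0 := abs_nonneg (d k x)
      have h2 : |d k x| ^ q ≤ M ^ (q - 1) * |d k x| := by
        rcases eq_or_lt_of_le hd0 with h0 | hposd
        · rw [← h0, Real.zero_rpow (ne_of_gt hq0), mul_zero]
        · have he : |d k x| ^ q = |d k x| ^ (q - 1) * |d k x| ^ (1:ℝ) := by
            rw [← Real.rpow_add hposd]
            norm_num
          rw [he, Real.rpow_one]
          have h3 : |d k x| ^ (q - 1) ≤ M ^ (q - 1) :=
            Real.rpow_le_rpow hd0 (hMb k x) (by linarith)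
          exact mul_le_mul_of_nonneg_right h3 hd0
      calc μ x * |d k x| ^ q ≤ μ x * (M ^ (q - 1) * |d k x|) :=
          mul_le_mul_of_nonneg_left h2 hμx
        _ = M ^ (q - 1) * (μ x * |d k x|) := by ring
    have hnnq : ∀ k, 0 ≤ ∑' x, μ x * |d k x| ^ q := fun k =>
      tsum_nonneg fun x => mul_nonneg (hμpos x).le (Real.rpow_nonneg (abs_nonneg _) q)
    have hsq : ∀ k, ∑' x, μ x * |d k x| ^ q ≤ M ^ (q - 1) * ∑' x, μ x * |d k x| := by
      intro k
      have hsummq : Summable (fun x => μ x * |d k x| ^ q) :=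
        Summable.of_nonneg_of_le
          (fun x => mul_nonneg (hμpos x).le (Real.rpow_nonneg (abs_nonneg _) q))
          (hkey k) ((hL1sum k).mul_left _)
      calc ∑' x, μ x * |d k x| ^ q ≤ ∑' x, M ^ (q - 1) * (μ x * |d k x|) :=
          Summable.tsum_le_tsum (hkey k) hsummq ((hL1sum k).mul_left _)
        _ = M ^ (q - 1) * ∑' x, μ x * |d k x| := tsum_mul_left
    have htz : Tendsto (fun k => ∑' x, μ x * |d k x| ^ q) atTop (𝓝 0) := by
      have hg0 : Tendsto (fun k => M ^ (q - 1) * ∑' x, μ x * |d k x|) atTop (𝓝 0) := by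
        have := hL1.const_mul (M ^ (q - 1))
        simpa using this
      exact squeeze_zero hnnq hsq hg0
    have hrpow := htz.rpow_const (p := 1 / q) (Or.inr (by positivity))
    rw [Real.zero_rpow (ne_of_gt (by positivity : (0:ℝ) < 1 / q))] at hrpow
    have hgoal : (fun k => LqNorm μ q fun x => uk (φ k) x - u x)
        = fun k => (∑' x, μ x * |d k x| ^ q) ^ (1 / q) := by
      funext k
      simp only [LqNorm, intV, hd]
    rw [hgoal]
    exact hrpow
  -- L^∞ convergence
  have hinf : Tendsto (fun k => LinfNorm fun x => uk (φ k) x - u x) atTop (𝓝 0) := by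
    have hLnn : ∀ k, (0:ℝ) ≤ LinfNorm fun x => uk (φ k) x - u x := fun k =>
      Real.iSup_nonneg fun x => abs_nonneg _
    rw [Metric.tendsto_atTop]
    intro ε hε
    set δ : ℝ := (ε / 2) ^ 2 * μmin / (8 * C ^ 2 + 1) with hδdef
    have hδ : 0 < δ := by
      rw [hδdef]
      exact div_pos (mul_pos (pow_pos (by linarith) 2) hμmin) (by positivity)
    have hδeq : δ * (8 * C ^ 2 + 1) = (ε / 2) ^ 2 * μmin := by
      rw [hδdef]
      field_simp <;> ring
    have hsum1h : Summable (fun x => 1 / h x) := by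
      refine Summable.of_nonneg_of_le (fun x => by have := hhpos x; positivity) (fun x => ?_)
        (hH2.mul_left (1 / μmin))
      have h1 : 1 ≤ μ x / μmin := (one_le_div hμmin).mpr (hμ x)
      calc 1 / h x = 1 * (1 / h x) := by ring
        _ ≤ (μ x / μmin) * (1 / h x) :=
            mul_le_mul_of_nonneg_right h1 (by have := hhpos x; positivity)
        _ = 1 / μmin * (μ x * (1 / h x)) := by ring
    have hev := hsum1h.tendsto_cofinite_zero.eventually (gt_mem_nhds hδ)
    rw [eventually_cofinite] at hev
    have hoff : ∀ k, ∀ x : V, x ∉ hev.toFinset → |d k x| ≤ ε / 2 := by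
      intro k x hx
      have hxδ : 1 / h x < δ := by
        by_contra hcon
        exact hx (hev.mem_toFinset.mpr hcon)
      have hhx := hhpos x
      have k1 : 1 < δ * h x := by
        rw [div_lt_iff₀ hhx] at hxδ
        linarith
      have h1 : μ x * (h x * d k x ^ 2) ≤ 8 * C ^ 2 := by
        have hle : μ x * (h x * d k x ^ 2) ≤ P (d k) x := by
          have hg := gradSq_nonneg hwnn hμpos (d k) x
          simp only [hP]
          nlinarith [(hμpos x).le]
        exact hle.trans ((Summable.le_tsum (hPdsum k) x fun y _ => hPnn _ y).trans (hTd k))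
      have h2 : d k x ^ 2 ≤ (ε / 2) ^ 2 := by
        have hf1 : μmin * (h x * d k x ^ 2) ≤ μ x * (h x * d k x ^ 2) :=
          mul_le_mul_of_nonneg_right (hμ x) (mul_nonneg hhx.le (sq_nonneg _))
        nlinarith [mul_pos hμmin hhx, mul_le_mul_of_nonneg_left k1.le
          (le_of_lt (show (0:ℝ) < 8 * C ^ 2 + 1 by positivity)), sq_nonneg (d k x), hδeq]
      have h3 : |d k x| ≤ ε / 2 := by
        rw [← Real.sqrt_sq_eq_abs]
        calc Real.sqrt (d k x ^ 2) ≤ Real.sqrt ((ε / 2) ^ 2) := Real.sqrt_le_sqrt h2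
          _ = ε / 2 := Real.sqrt_sq (by linarith)
      exact h3
    have hone : ∀ x ∈ hev.toFinset, ∀ᶠ k in atTop, |d k x| < ε / 2 := by
      intro x _
      have h0 := (hdpt x).abs
      rw [abs_zero] at h0
      exact h0.eventually (gt_mem_nhds (by linarith))
    have hall : ∀ᶠ k in atTop, ∀ x ∈ hev.toFinset, |d k x| < ε / 2 :=
      (eventually_all_finset _).mpr hone
    obtain ⟨N, hN⟩ := eventually_atTop.mp hall
    refine ⟨N, fun k hk => ?_⟩
    rw [Real.dist_eq, sub_zero, abs_of_nonneg (hLnn k)]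
    have hsup : LinfNorm (fun x => uk (φ k) x - u x) ≤ ε / 2 := by
      refine Real.iSup_le (fun x => ?_) (by linarith)
      have hgx : |(fun x => uk (φ k) x - u x) x| = |d k x| := by rw [hdx k x]
      rw [hgx]
      by_cases hx : x ∈ hev.toFinset
      · exact (hN k hk x hx).le
      · exact hoff k x hx
    linarith
  exact ⟨u, humem, φ, hφmono, hweak, hLq, hinf⟩


end GraphNLE
end

section
/- Let G=(V,E) be a locally finite graph with symmetric positive edge weights and measure μ:V→(0,∞), let h satisfy (H1), and let f satisfy (F2) with f(x,s)=0 for s ≤ 0. Then there exists a nonnegative function u ∈ ℋ such that J(tu) → −∞ as t → +∞, where J(u) = (1/2)∫_V(|∇u|² + hu²)dμ − ∫_V F(x,u)dμ. -/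
open Filter Topology

namespace GraphNLE

variable {V : Type*}

theorem energy_unbounded_below [Nonempty V]
    (w : V → V → ℝ) (hsymm : ∀ x y, w x y = w y x) (hwnn : ∀ x y, 0 ≤ w x y)
    (hlf : ∀ x : V, {y | w x y ≠ 0}.Finite)
    (μ : V → ℝ) (hμ : ∀ x, 0 < μ x)
    (h : V → ℝ) (h₀ : ℝ) (hh₀ : 0 < h₀) (hH1 : ∀ x, h₀ ≤ h x)
    (f : V → ℝ → ℝ)
    (hF2 : ∃ θ : ℝ, 2 < θ ∧ ∀ x, ∀ s : ℝ, 0 < s →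
      0 < θ * Fint f x s ∧ θ * Fint f x s ≤ s * f x s)
    (hfneg : ∀ x, ∀ s : ℝ, s ≤ 0 → f x s = 0) :
    ∃ u : V → ℝ, memH w μ h u ∧ (∀ x, 0 ≤ u x) ∧
      Tendsto (fun t : ℝ => energy w μ h f fun x => t * u x) atTop atBot := by
  classical
  obtain ⟨θ, hθ, hF2⟩ := hF2
  have hθ0 : (0:ℝ) < θ := by linarith
  set x₀ : V := Classical.arbitrary V with hx₀
  set u : V → ℝ := fun x => if x = x₀ then 1 else 0 with hu
  have hu0 : ∀ x, x ≠ x₀ → u x = 0 := fun x hx => if_neg hx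
  have hu1 : u x₀ = 1 := if_pos rfl
  -- Basic facts about F := Fint f x₀
  set F : ℝ → ℝ := Fint f x₀ with hF
  have Fdef : ∀ s, F s = ∫ τ in (0:ℝ)..s, f x₀ τ := fun s => rfl
  have Fpos : ∀ s, 0 < s → 0 < F s := fun s hs => by nlinarith [(hF2 x₀ s hs).1]
  have Fineq : ∀ s, 0 < s → θ * F s ≤ s * f x₀ s := fun s hs => (hF2 x₀ s hs).2
  have fpos : ∀ s, 0 < s → 0 < f x₀ s := by
    intro s hs
    have h1 : 0 < s * f x₀ s := lt_of_lt_of_le (hF2 x₀ s hs).1 (Fineq s hs)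
    nlinarith
  have Fiint : ∀ s, 0 < s → IntervalIntegrable (f x₀) MeasureTheory.volume 0 s := by
    intro s hs
    by_contra hc
    have h0 : F s = 0 := intervalIntegral.integral_undef hc
    linarith [Fpos s hs]
  have Fmono : ∀ a b, 0 < a → a ≤ b → F a ≤ F b := by
    intro a b ha hab
    have hb : 0 < b := lt_of_lt_of_le ha hab
    have hii : IntervalIntegrable (f x₀) MeasureTheory.volume a b := by
      apply (Fiint b hb).mono_set
      apply Set.uIcc_subset_uIcc
      · exact Set.mem_uIcc.mpr (Or.inl ⟨ha.le, hab⟩)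
      · exact Set.mem_uIcc.mpr (Or.inl ⟨hb.le, le_refl b⟩)
    have hadd : F a + ∫ τ in a..b, f x₀ τ = F b :=
      intervalIntegral.integral_add_adjacent_intervals (Fiint a ha) hii
    have hnn : 0 ≤ ∫ τ in a..b, f x₀ τ :=
      intervalIntegral.integral_nonneg hab (fun τ hτ => (fpos τ (lt_of_lt_of_le ha hτ.1)).le)
    linarith
  -- constants
  set δ : ℝ := min ((θ - 2)/4) (1/2) with hδ
  have hδ0 : 0 < δ := lt_min (by linarith) (by norm_num)
  have hδle : δ ≤ 1/2 := min_le_right _ _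
  have hδθ : 4*δ ≤ θ - 2 := by
    have h1 : δ ≤ (θ-2)/4 := min_le_left _ _
    linarith
  set r : ℝ := 1 + δ with hr
  have hr1 : 1 < r := by rw [hr]; linarith
  have hr0 : 0 < r := by linarith
  set K : ℝ := 1 + θ * (1 - 1/r) with hK
  have h1r : 1 - 1/r = δ / r := by
    rw [hr]; field_simp; ring
  have hK1 : 1 < K := by
    have h1 : 0 < θ * (1 - 1/r) := by
      rw [h1r]
      exact mul_pos hθ0 (div_pos hδ0 hr0)
    rw [hK]; linarith
  have hK0 : (0:ℝ) < K := by linarith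
  have hKr : r^2 < K := by
    have h1δ : (0:ℝ) < 1 + δ := by linarith
    have hKr' : K - r^2 = (θ*δ - (2*δ + 3*δ^2 + δ^3)) / (1+δ) := by
      rw [hK, h1r, hr]; field_simp; ring
    have hnum : 0 < θ*δ - (2*δ + 3*δ^2 + δ^3) := by nlinarith
    have h2 : 0 < K - r^2 := by
      rw [hKr']; exact div_pos hnum h1δ
    linarith
  -- the key doubling estimate
  have FK : ∀ s, 0 < s → K * F s ≤ F (r * s) := by
    intro s hs
    have hsr : s ≤ r * s := by nlinarith
    have hrs0 : 0 < r * s := mul_pos hr0 hs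
    have hii : IntervalIntegrable (f x₀) MeasureTheory.volume s (r*s) := by
      apply (Fiint (r*s) hrs0).mono_set
      apply Set.uIcc_subset_uIcc
      · exact Set.mem_uIcc.mpr (Or.inl ⟨hs.le, hsr⟩)
      · exact Set.mem_uIcc.mpr (Or.inl ⟨hrs0.le, le_refl _⟩)
    have hadd : F s + ∫ τ in s..(r*s), f x₀ τ = F (r*s) :=
      intervalIntegral.integral_add_adjacent_intervals (Fiint s hs) hii
    have hpt : ∀ τ ∈ Set.Icc s (r*s), θ * F s / (r*s) ≤ f x₀ τ := by
      intro τ hτ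
      have hτ0 : 0 < τ := lt_of_lt_of_le hs hτ.1
      have h1 : θ * F s ≤ θ * F τ :=
        mul_le_mul_of_nonneg_left (Fmono s τ hs hτ.1) hθ0.le
      have h2 : θ * F s / (r*s) ≤ θ * F τ / τ :=
        div_le_div₀ (by nlinarith [Fpos τ hτ0]) h1 hτ0 hτ.2
      have h3 : θ * F τ / τ ≤ f x₀ τ := by
        rw [div_le_iff₀ hτ0]
        calc θ * F τ ≤ τ * f x₀ τ := Fineq τ hτ0
        _ = f x₀ τ * τ := by ring
      linarith
    have hconst : (r*s - s) * (θ * F s / (r*s)) ≤ ∫ τ in s..(r*s), f x₀ τ := by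
      have hm := intervalIntegral.integral_mono_on hsr
        (intervalIntegrable_const (c := θ * F s / (r*s))) hii hpt
      rwa [intervalIntegral.integral_const, smul_eq_mul] at hm
    have halg : (r*s - s) * (θ * F s / (r*s)) = θ * (1 - 1/r) * F s := by
      field_simp
    rw [halg] at hconst
    have hKexp : K * F s = F s + θ * (1 - 1/r) * F s := by rw [hK]; ring
    calc K * F s = F s + θ * (1 - 1/r) * F s := hKexp
    _ ≤ F s + ∫ τ in s..(r*s), f x₀ τ := by linarith [hconst]
    _ = F (r*s) := hadd
  have Fpow : ∀ n : ℕ, K^n * F 1 ≤ F (r^n) := by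
    intro n; induction n with
    | zero => simp
    | succ n ih =>
      have h1 : K * F (r^n) ≤ F (r * r^n) := FK (r^n) (pow_pos hr0 n)
      have h2 : K * (K^n * F 1) ≤ K * F (r^n) :=
        mul_le_mul_of_nonneg_left ih hK0.le
      calc K^(n+1) * F 1 = K * (K^n * F 1) := by ring
      _ ≤ F (r * r^n) := le_trans h2 h1
      _ = F (r^(n+1)) := by rw [← pow_succ']
  -- real-exponent growth
  set α : ℝ := Real.log K / Real.log r with hα
  have hlogr : 0 < Real.log r := Real.log_pos hr1
  have hlogK2 : 2 * Real.log r < Real.log K := by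
    have h1 : Real.log (r^2) < Real.log K := Real.log_lt_log (by positivity) hKr
    rwa [Real.log_pow, Nat.cast_ofNat] at h1
  have hα2 : 2 < α := by
    rw [hα, lt_div_iff₀ hlogr]; linarith
  have hα0 : 0 < α := by linarith
  have Fgrow : ∀ t : ℝ, 1 ≤ t → (F 1 / K) * t ^ α ≤ F t := by
    intro t ht
    have ht0 : 0 < t := by linarith
    have hlt0 : 0 ≤ Real.log t := Real.log_nonneg ht
    set n : ℕ := ⌊Real.log t / Real.log r⌋₊ with hn
    have hn1 : (n:ℝ) ≤ Real.log t / Real.log r := Nat.floor_le (by positivity)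
    have hn2 : Real.log t / Real.log r < n + 1 := Nat.lt_floor_add_one _
    have hrn : r^n ≤ t := by
      have h1 : Real.log (r^n) ≤ Real.log t := by
        rw [Real.log_pow]
        exact (le_div_iff₀ hlogr).mp hn1
      exact (Real.log_le_log_iff (pow_pos hr0 n) ht0).mp h1
    have hKn : t ^ α / K ≤ (K:ℝ)^n := by
      have h1 : t ^ α = Real.exp (α * Real.log t) := by
        rw [Real.rpow_def_of_pos ht0]; ring_nf
      have h2 : (K:ℝ)^n = Real.exp ((n:ℝ) * Real.log K) := by
        rw [← Real.log_pow, Real.exp_log (pow_pos hK0 n)]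
      have hlogK0 : 0 < Real.log K := by linarith
      have h3 : Real.exp ((Real.log t / Real.log r - 1) * Real.log K)
          ≤ Real.exp ((n:ℝ) * Real.log K) := by
        apply Real.exp_le_exp.mpr
        have h4 : Real.log t / Real.log r - 1 ≤ (n:ℝ) := by linarith
        exact mul_le_mul_of_nonneg_right h4 hlogK0.le
      have h4 : (Real.log t / Real.log r - 1) * Real.log K = α * Real.log t - Real.log K := by
        rw [hα]; field_simp
      calc t ^ α / K = Real.exp (α * Real.log t) / Real.exp (Real.log K) := by
            rw [h1, Real.exp_log hK0]
      _ = Real.exp (α * Real.log t - Real.log K) := (Real.exp_sub _ _).symm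
      _ = Real.exp ((Real.log t / Real.log r - 1) * Real.log K) := by rw [h4]
      _ ≤ Real.exp ((n:ℝ) * Real.log K) := h3
      _ = K^n := h2.symm
    have hF1 : 0 < F 1 := Fpos 1 one_pos
    calc (F 1 / K) * t ^ α = (t ^ α / K) * F 1 := by ring
    _ ≤ K^n * F 1 := mul_le_mul_of_nonneg_right hKn hF1.le
    _ ≤ F (r^n) := Fpow n
    _ ≤ F t := Fmono (r^n) t (pow_pos hr0 n) hrn
  -- membership and nonnegativity
  refine ⟨u, ⟨?_, ?_⟩, ?_, ?_⟩
  · apply summable_of_ne_finset_zero (s := insert x₀ (hlf x₀).toFinset)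
    intro x hx
    have hxne : x ≠ x₀ := by
      intro hxe; exact hx (by simp [hxe])
    have hw : w x x₀ = 0 := by
      have h1 : w x₀ x = 0 := by
        by_contra hc
        exact hx (Finset.mem_insert_of_mem ((hlf x₀).mem_toFinset.mpr hc))
      rw [hsymm]; exact h1
    have hg : gradSq w μ u x = 0 := by
      unfold gradSq
      have hz : (fun y => w x y * (u y - u x)^2) = fun _ => 0 := by
        funext y
        by_cases hy : y = x₀
        · subst hy; rw [hw]; ring
        · rw [hu0 y hy, hu0 x hxne]; ring
      rw [hz, tsum_zero, mul_zero]
    rw [hg, mul_zero]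
  · apply summable_of_ne_finset_zero (s := {x₀})
    intro x hx
    rw [hu0 x (by simpa using hx)]
    ring
  · intro x
    by_cases hx : x = x₀ <;> simp [hu, hx]
  -- the limit
  · set A : ℝ := intV μ (fun x => gradSq w μ u x + h x * u x ^ 2) with hA
    have hA0 : 0 ≤ A := by
      rw [hA]; unfold intV
      apply tsum_nonneg; intro x
      apply mul_nonneg (hμ x).le
      apply add_nonneg
      · unfold gradSq
        apply mul_nonneg
        · have := (hμ x).le
          positivity
        · exact tsum_nonneg fun y => mul_nonneg (hwnn x y) (sq_nonneg _)
      · exact mul_nonneg (le_trans hh₀.le (hH1 x)) (sq_nonneg _)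
    have hE : ∀ t : ℝ, energy w μ h f (fun x => t * u x) = (1/2) * (t^2 * A) - μ x₀ * F t := by
      intro t
      unfold energy
      have hq : intV μ (fun x => gradSq w μ (fun y => t * u y) x + h x * (t * u x)^2)
          = t^2 * A := by
        rw [hA]; unfold intV
        rw [show (fun x => μ x * (gradSq w μ (fun y => t * u y) x + h x * (t * u x)^2))
              = fun x => t^2 * (μ x * (gradSq w μ u x + h x * u x ^ 2)) from ?_]
        · exact tsum_mul_left
        funext x
        have hg : gradSq w μ (fun y => t * u y) x = t^2 * gradSq w μ u x := by
          unfold gradSq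
          rw [show (fun y => w x y * ((t * u y) - (t * u x))^2)
                = fun y => t^2 * (w x y * (u y - u x)^2) from funext fun y => by ring,
            tsum_mul_left]
          ring
        rw [hg]; ring
      have hlin : intV μ (fun x => Fint f x (t * u x)) = μ x₀ * F t := by
        unfold intV
        rw [tsum_eq_single x₀ ?_]
        · show μ x₀ * Fint f x₀ (t * u x₀) = μ x₀ * F t
          rw [hu1, mul_one]
        · intro x hx
          show μ x * Fint f x (t * u x) = 0
          rw [hu0 x hx, mul_zero]
          simp [Fint]
      rw [hq, hlin]
    set c : ℝ := μ x₀ * (F 1 / K) with hc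
    have hc0 : 0 < c := mul_pos (hμ x₀) (div_pos (Fpos 1 one_pos) hK0)
    have hφ : Tendsto (fun t : ℝ => t ^ α * ((A/2) * t ^ ((2:ℝ) - α) - c)) atTop atBot := by
      have hg : Tendsto (fun t : ℝ => (A/2) * t ^ ((2:ℝ) - α) - c) atTop (nhds ((A/2) * 0 - c)) := by
        apply Tendsto.sub_const
        apply Tendsto.const_mul
        have h1 := tendsto_rpow_neg_atTop (show 0 < α - 2 by linarith)
        simpa [neg_sub] using h1
      have hC : (A/2) * 0 - c < 0 := by simp; linarith
      exact (tendsto_rpow_atTop hα0).atTop_mul_neg hC hg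
    apply tendsto_atBot_mono' atTop ?_ hφ
    filter_upwards [eventually_ge_atTop (1:ℝ)] with t ht
    have ht0 : 0 < t := by linarith
    rw [hE t]
    have hsplit : t ^ α * ((A/2) * t ^ ((2:ℝ) - α) - c) = (A/2) * t^2 - c * t ^ α := by
      have h2 : t ^ α * t ^ ((2:ℝ) - α) = t ^ (2:ℝ) := by
        rw [← Real.rpow_add ht0]; norm_num
      have h3 : t ^ (2:ℝ) = t^2 := by
        rw [show (2:ℝ) = ((2:ℕ):ℝ) by norm_num, Real.rpow_natCast]
      calc t ^ α * ((A/2) * t ^ ((2:ℝ) - α) - c)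
          = (A/2) * (t ^ α * t ^ ((2:ℝ) - α)) - c * t ^ α := by ring
      _ = (A/2) * t^2 - c * t ^ α := by rw [h2, h3]
    rw [hsplit]
    have hct : c * t ^ α ≤ μ x₀ * F t := by
      rw [hc]
      calc μ x₀ * (F 1 / K) * t ^ α = μ x₀ * ((F 1 / K) * t ^ α) := by ring
      _ ≤ μ x₀ * F t := mul_le_mul_of_nonneg_left (Fgrow t ht) (hμ x₀).le
    have heq : (1/2) * (t^2 * A) = (A/2) * t^2 := by ring
    rw [heq]
    linarith

end GraphNLE
end

section
/- Let G=(V,E) be a locally finite graph with symmetric positive edge weights and measure μ:V→(0,∞), let h satisfy (H1), let f satisfy (F2) with f(x,s)=0 for s ≤ 0, let g ∈ ℋ', and let ε > 0. Then there exists u ∈ ℋ such that J_ε(tu) → −∞ as t → +∞, where J_ε(u) = (1/2)‖u‖_ℋ² − ∫_V F(x,u)dμ − ε∫_V gu dμ. -/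
open Filter Topology

namespace GraphNLE

variable {V : Type*}

lemma growth_aux (f₀ : ℝ → ℝ) (θ : ℝ) (hθ : 2 < θ)
    (Φ : ℝ → ℝ) (hΦ : ∀ s, Φ s = ∫ t in (0:ℝ)..s, f₀ t)
    (hF2 : ∀ s : ℝ, 0 < s → 0 < θ * Φ s ∧ θ * Φ s ≤ s * f₀ s) :
    ∀ c : ℝ, ∀ᶠ t in atTop, c * t ^ 2 ≤ Φ t := by
  have hθ0 : (0:ℝ) < θ := by linarith
  have hΦpos : ∀ s : ℝ, 0 < s → 0 < Φ s := by
    intro s hs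
    nlinarith [(hF2 s hs).1]
  have hint : ∀ s : ℝ, 0 < s → IntervalIntegrable f₀ MeasureTheory.volume 0 s := by
    intro s hs
    by_contra hni
    have h0 := intervalIntegral.integral_undef hni
    have := hΦpos s hs
    rw [hΦ s, h0] at this
    exact lt_irrefl _ this
  have hfpos : ∀ s : ℝ, 0 < s → 0 < f₀ s := by
    intro s hs
    have h1 := (hF2 s hs).1
    have h2 := (hF2 s hs).2
    nlinarith
  have hsub : ∀ a b : ℝ, 0 < a → a ≤ b → IntervalIntegrable f₀ MeasureTheory.volume a b := by
    intro a b ha hab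
    refine (hint b (lt_of_lt_of_le ha hab)).mono_set ?_
    rw [Set.uIcc_of_le hab, Set.uIcc_of_le (by linarith : (0:ℝ) ≤ b)]
    exact Set.Icc_subset_Icc (by linarith) le_rfl
  have hsplit : ∀ a b : ℝ, 0 < a → a ≤ b → Φ b = Φ a + ∫ t in a..b, f₀ t := by
    intro a b ha hab
    rw [hΦ a, hΦ b,
      intervalIntegral.integral_add_adjacent_intervals (hint a ha) (hsub a b ha hab)]
  have hmono : ∀ a b : ℝ, 0 < a → a ≤ b → Φ a ≤ Φ b := by
    intro a b ha hab
    rw [hsplit a b ha hab]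
    have : 0 ≤ ∫ t in a..b, f₀ t :=
      intervalIntegral.integral_nonneg hab (fun u hu => (hfpos u (lt_of_lt_of_le ha hu.1)).le)
    linarith
  -- key step inequality
  have hstep : ∀ K : ℝ, 1 < K → ∀ s : ℝ, 0 < s →
      Φ s * (1 + θ * Real.log K) ≤ Φ (K * s) := by
    intro K hK s hs
    have hsK : s ≤ K * s := by nlinarith
    have hΦs := hΦpos s hs
    have hKs0 : 0 < K * s := by nlinarith
    have hlow : ∀ u ∈ Set.Icc s (K * s), θ * Φ s * (1 / u) ≤ f₀ u := by
      intro u hu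
      have hu0 : 0 < u := lt_of_lt_of_le hs hu.1
      have h1 : θ * Φ s ≤ θ * Φ u := by
        have := hmono s u hs hu.1
        nlinarith
      have h2 := (hF2 u hu0).2
      rw [mul_one_div, div_le_iff₀ hu0]
      nlinarith
    have hintlow : IntervalIntegrable (fun u => θ * Φ s * (1 / u)) MeasureTheory.volume s (K * s) := by
      apply ContinuousOn.intervalIntegrable
      apply ContinuousOn.mul continuousOn_const
      apply ContinuousOn.div continuousOn_const continuousOn_id
      intro x hx
      rw [Set.uIcc_of_le hsK] at hx
      exact ne_of_gt (lt_of_lt_of_le hs hx.1)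
    have hmonoInt : ∫ u in s..(K*s), θ * Φ s * (1 / u) ≤ ∫ u in s..(K*s), f₀ u :=
      intervalIntegral.integral_mono_on hsK hintlow (hsub s (K*s) hs hsK) hlow
    have hval : ∫ u in s..(K*s), θ * Φ s * (1 / u) = θ * Φ s * Real.log K := by
      rw [intervalIntegral.integral_const_mul, integral_one_div]
      · rw [mul_div_assoc, div_self (ne_of_gt hs), mul_one]
      · rw [Set.uIcc_of_le hsK]
        intro h0
        exact absurd h0.1 (not_le.2 hs)
    rw [hsplit s (K*s) hs hsK]
    rw [hval] at hmonoInt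
    nlinarith
  -- choose K
  set δ : ℝ := min 1 ((θ - 2)/5) with hδdef
  have hδ0 : 0 < δ := lt_min one_pos (by linarith)
  have hδ1 : δ ≤ 1 := min_le_left _ _
  have hδθ : δ ≤ (θ - 2)/5 := min_le_right _ _
  set K : ℝ := 1 + δ with hKdef
  have hK1 : 1 < K := by simp [hKdef]; linarith
  have hK0 : 0 < K := by linarith
  have hlogK : δ / (1 + δ) ≤ Real.log K := by
    have h := Real.log_le_sub_one_of_pos (show (0:ℝ) < 1/K by positivity)
    rw [one_div, Real.log_inv] at h
    have hKinv : K⁻¹ = 1 / (1 + δ) := by rw [hKdef, one_div]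
    rw [hKinv] at h
    have : δ / (1 + δ) = 1 - 1/(1+δ) := by field_simp; ring
    linarith
  set B : ℝ := 1 + θ * Real.log K with hBdef
  have hlogK0 : 0 < Real.log K := Real.log_pos hK1
  have hB1 : 1 < B := by nlinarith
  have hBK : K ^ 2 < B := by
    have h1 : θ * (δ / (1+δ)) ≤ θ * Real.log K := by nlinarith
    have h2 : (2*δ + δ^2) * (1 + δ) < θ * δ := by nlinarith
    have h3 : 2*δ + δ^2 < θ * (δ / (1+δ)) := by
      rw [mul_div_assoc', lt_div_iff₀ (by linarith : (0:ℝ) < 1 + δ)]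
      linarith
    have : K ^ 2 = 1 + (2*δ + δ^2) := by rw [hKdef]; ring
    linarith
  have hΦ1 : 0 < Φ 1 := hΦpos 1 one_pos
  have hpow : ∀ n : ℕ, Φ 1 * B ^ n ≤ Φ (K ^ n) := by
    intro n
    induction n with
    | zero => simp
    | succ n ih =>
      have hKn : (0:ℝ) < K ^ n := pow_pos hK0 n
      have h1 := hstep K hK1 (K ^ n) hKn
      have h2 : Φ (K ^ n) * B ≤ Φ (K * K ^ n) := h1
      have h3 : Φ 1 * B ^ n * B ≤ Φ (K ^ n) * B := by
        have hB0 : (0:ℝ) < B := by linarith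
        nlinarith
      calc Φ 1 * B ^ (n+1) = Φ 1 * B ^ n * B := by ring
        _ ≤ Φ (K ^ n) * B := h3
        _ ≤ Φ (K * K ^ n) := h2
        _ = Φ (K ^ (n+1)) := by rw [pow_succ]; ring_nf
  -- main
  intro c
  set c' : ℝ := max c 0 + 1 with hc'def
  have hc'0 : 0 < c' := by positivity
  have hcc' : c ≤ c' := le_trans (le_max_left _ _) (by linarith)
  have hr : 1 < B / K ^ 2 := (one_lt_div (by positivity)).2 hBK
  obtain ⟨N, hN⟩ := Filter.eventually_atTop.1
    ((tendsto_pow_atTop_atTop_of_one_lt hr).eventually_ge_atTop (c' * K ^ 2 / Φ 1))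
  have hBn : ∀ n : ℕ, N ≤ n → c' * K ^ 2 * (K ^ 2) ^ n ≤ Φ 1 * B ^ n := by
    intro n hn
    have h := hN n hn
    have hK2n : (0:ℝ) < (K ^ 2) ^ n := by positivity
    rw [div_pow, div_le_div_iff₀ hΦ1 hK2n] at h
    nlinarith
  refine eventually_atTop.2 ⟨K ^ N, fun t ht => ?_⟩
  have hKN1 : (1:ℝ) ≤ K ^ N := one_le_pow₀ hK1.le
  have ht1 : 1 ≤ t := le_trans hKN1 ht
  have ht0 : 0 < t := lt_of_lt_of_le one_pos ht1
  set L := Real.logb K t with hLdef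
  have hL0 : 0 ≤ L := Real.logb_nonneg hK1 ht1
  set m := ⌊L⌋₊ with hmdef
  have hrwL : K ^ (L:ℝ) = t := Real.rpow_logb hK0 (ne_of_gt hK1) ht0
  have hKm : (K:ℝ) ^ m ≤ t := by
    calc (K:ℝ) ^ m = K ^ ((m:ℕ):ℝ) := (Real.rpow_natCast K m).symm
      _ ≤ K ^ (L:ℝ) := Real.rpow_le_rpow_of_exponent_le hK1.le (Nat.floor_le hL0)
      _ = t := hrwL
  have htK : t ≤ (K:ℝ) ^ (m+1) := by
    calc t = K ^ (L:ℝ) := hrwL.symm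
      _ ≤ K ^ (((m:ℕ):ℝ) + 1) := Real.rpow_le_rpow_of_exponent_le hK1.le (Nat.lt_floor_add_one L).le
      _ = (K:ℝ) ^ (m+1) := by rw [show ((m:ℕ):ℝ) + 1 = (((m+1:ℕ)):ℝ) by push_cast; ring, Real.rpow_natCast]
  have hmN : N ≤ m := by
    apply Nat.le_floor
    rw [hLdef, Real.le_logb_iff_rpow_le hK1 ht0, Real.rpow_natCast]
    exact ht
  have h1 : c' * t ^ 2 ≤ c' * ((K:ℝ) ^ (m+1)) ^ 2 :=
    mul_le_mul_of_nonneg_left (pow_le_pow_left₀ ht0.le htK 2) hc'0.le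
  have h2 : c' * ((K:ℝ) ^ (m+1)) ^ 2 = c' * K ^ 2 * (K ^ 2) ^ m := by
    rw [← pow_mul, ← pow_mul, mul_assoc, ← pow_add]
    congr 1
    ring
  have h3 := hBn m hmN
  have h4 := hpow m
  have h5 : Φ (K ^ m) ≤ Φ t := hmono _ _ (pow_pos hK0 m) hKm
  have h6 : c * t ^ 2 ≤ c' * t ^ 2 := mul_le_mul_of_nonneg_right hcc' (sq_nonneg t)
  linarith

theorem perturbed_energy_unbounded_below [Nonempty V]
    (w : V → V → ℝ) (hsymm : ∀ x y, w x y = w y x) (hwnn : ∀ x y, 0 ≤ w x y)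
    (hlf : ∀ x : V, {y | w x y ≠ 0}.Finite)
    (μ : V → ℝ) (hμ : ∀ x, 0 < μ x)
    (h : V → ℝ) (h₀ : ℝ) (hh₀ : 0 < h₀) (hH1 : ∀ x, h₀ ≤ h x)
    (f : V → ℝ → ℝ)
    (hF2 : ∃ θ : ℝ, 2 < θ ∧ ∀ x, ∀ s : ℝ, 0 < s →
      0 < θ * Fint f x s ∧ θ * Fint f x s ≤ s * f x s)
    (hfneg : ∀ x, ∀ s : ℝ, s ≤ 0 → f x s = 0)
    (g : V → ℝ) (hgdual : memHdual w μ h g)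
    (ε : ℝ) (hε : 0 < ε) :
    ∃ u : V → ℝ, memH w μ h u ∧
      Tendsto (fun t : ℝ => energyP w μ h f g ε fun x => t * u x) atTop atBot := by
  classical
  obtain ⟨x₀⟩ := ‹Nonempty V›
  obtain ⟨θ, hθ, hF2'⟩ := hF2
  set u : V → ℝ := fun x => if x = x₀ then 1 else 0 with hudef
  have hux₀ : u x₀ = 1 := if_pos rfl
  have hu0 : ∀ x, x ≠ x₀ → u x = 0 := fun x hx => if_neg hx
  have hgrad0 : ∀ x, x ≠ x₀ → w x₀ x = 0 → gradSq w μ u x = 0 := by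
    intro x hx hw
    unfold gradSq
    have hz : (fun y => w x y * (u y - u x) ^ 2) = fun _ => 0 := by
      funext y
      by_cases hy : y = x₀
      · rw [hy, hu0 x hx, hsymm x x₀, hw]
        ring
      · rw [hu0 x hx, hu0 y hy]
        ring
    rw [hz, tsum_zero, mul_zero]
  have hmem : memH w μ h u := by
    constructor
    · apply summable_of_ne_finset_zero (s := insert x₀ (hlf x₀).toFinset)
      intro x hx
      simp only [Finset.mem_insert, Set.Finite.mem_toFinset, Set.mem_setOf_eq, not_or,
        not_not] at hx
      rw [hgrad0 x hx.1 hx.2, mul_zero]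
    · apply summable_of_ne_finset_zero (s := {x₀})
      intro x hx
      simp only [Finset.mem_singleton] at hx
      rw [hu0 x hx]
      ring
  refine ⟨u, hmem, ?_⟩
  have hscale : ∀ t : ℝ, ∀ x, gradSq w μ (fun y => t * u y) x = t ^ 2 * gradSq w μ u x := by
    intro t x
    unfold gradSq
    have hz : (fun y => w x y * ((t * u y) - (t * u x)) ^ 2)
        = fun y => t ^ 2 * (w x y * (u y - u x) ^ 2) := by
      funext y; ring
    show (1 / (2 * μ x)) * ∑' y, w x y * ((t * u y) - (t * u x)) ^ 2 = _
    rw [hz, tsum_mul_left]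
    ring
  set Q : ℝ := intV μ (fun x => gradSq w μ u x + h x * u x ^ 2) with hQdef
  have e1 : ∀ t : ℝ, intV μ (fun x => gradSq w μ (fun y => t * u y) x + h x * (t * u x) ^ 2)
      = t ^ 2 * Q := by
    intro t
    unfold intV
    have hz : (fun x => μ x * (gradSq w μ (fun y => t * u y) x + h x * (t * u x) ^ 2))
        = fun x => t ^ 2 * (μ x * (gradSq w μ u x + h x * u x ^ 2)) := by
      funext x
      rw [hscale t x]
      ring
    rw [hz, tsum_mul_left]
    rfl
  have e2 : ∀ t : ℝ, intV μ (fun x => Fint f x (t * u x)) = μ x₀ * Fint f x₀ t := by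
    intro t
    unfold intV
    rw [tsum_eq_single x₀]
    · beta_reduce
      rw [hux₀, mul_one]
    · intro x hx
      beta_reduce
      rw [hu0 x hx, mul_zero]
      have : Fint f x 0 = 0 := intervalIntegral.integral_same
      rw [this, mul_zero]
  have e3 : ∀ t : ℝ, intV μ (fun x => g x * (t * u x)) = μ x₀ * (g x₀ * t) := by
    intro t
    unfold intV
    rw [tsum_eq_single x₀]
    · beta_reduce
      rw [hux₀]; ring
    · intro x hx
      beta_reduce
      rw [hu0 x hx]; ring
  have hJ : ∀ t : ℝ, energyP w μ h f g ε (fun x => t * u x)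
      = (1 / 2) * (t ^ 2 * Q) - μ x₀ * Fint f x₀ t - ε * (μ x₀ * (g x₀ * t)) := by
    intro t
    show (1 / 2) * intV μ (fun x => gradSq w μ (fun y => t * u y) x + h x * (t * u x) ^ 2)
        - intV μ (fun x => Fint f x (t * u x)) - ε * intV μ (fun x => g x * (t * u x)) = _
    rw [e1 t, e2 t, e3 t]
  -- growth of Fint f x₀
  have hgrow := growth_aux (f x₀) θ hθ (Fint f x₀) (fun s => rfl) (fun s hs => hF2' x₀ s hs)
  set M : ℝ := μ x₀ with hMdef
  have hM : 0 < M := hμ x₀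
  set E : ℝ := ε * (M * |g x₀|) with hEdef
  have hE : 0 ≤ E := by positivity
  set c : ℝ := (|Q| / 2 + E + 1) / M with hcdef
  have hMc : M * c = |Q| / 2 + E + 1 := by
    rw [hcdef]
    field_simp
  have hev : ∀ᶠ t : ℝ in atTop, energyP w μ h f g ε (fun x => t * u x) ≤ -(t ^ 2) := by
    filter_upwards [hgrow c, eventually_ge_atTop (1:ℝ)] with t hgt ht1
    rw [hJ t]
    have hMΦ : M * (c * t ^ 2) ≤ M * Fint f x₀ t := mul_le_mul_of_nonneg_left hgt hM.le
    have h1 : (1 / 2) * (t ^ 2 * Q) ≤ (|Q| / 2) * t ^ 2 := by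
      have := le_abs_self Q
      nlinarith [sq_nonneg t]
    have h2 : -(ε * (M * (g x₀ * t))) ≤ E * t ^ 2 := by
      have hle : -(g x₀) ≤ |g x₀| := neg_le_abs _
      have ht0 : (0:ℝ) ≤ t := by linarith
      have htt : t ≤ t ^ 2 := by nlinarith
      have : ε * (M * (-(g x₀) * t)) ≤ ε * (M * (|g x₀| * t)) := by
        apply mul_le_mul_of_nonneg_left _ hε.le
        apply mul_le_mul_of_nonneg_left _ hM.le
        exact mul_le_mul_of_nonneg_right hle ht0
      have h3 : ε * (M * (|g x₀| * t)) = E * t := by rw [hEdef]; ring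
      have h4 : E * t ≤ E * t ^ 2 := by nlinarith
      nlinarith
    nlinarith [hMΦ, hMc, sq_nonneg t]
  have hneg : Tendsto (fun t : ℝ => -(t ^ 2)) atTop atBot :=
    tendsto_neg_atTop_atBot.comp (tendsto_pow_atTop (two_ne_zero))
  exact tendsto_atBot_mono' atTop hev hneg
end GraphNLE
end
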